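/- Let R be a braid-equation operator on V⊗V with (R−q)(R−1)=0, q(q−1)(q²−q+1)≠0. Let Π_Γ = Im((R₁₂−q)(R₂₃−1)). For x ∈ Π_Γ set y = q^{-1}R₁₃x where R₁₃ = R₁₂R₂₃R₁₂. Then R₁₂x = x, R₂₃x = qx + y, R₁₂y = −qx + qy, and R₂₃y = y; in particular y ∈ Im((R₂₃−q)(R₁₂−1)). -/

import Mathlib

open TensorProduct

variable {k : Type*} [Field k] {V : Type*} [AddCommGroup V] [Module k V]

/-- The operator `R ⊗ id` acting on `V ⊗ V ⊗ V` (associated as `V ⊗ (V ⊗ V)`). -/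
noncomputable def R₁₂ (R : Module.End k (V ⊗[k] V)) :
    Module.End k (V ⊗[k] (V ⊗[k] V)) :=
  (TensorProduct.assoc k V V V).toLinearMap ∘ₗ
    TensorProduct.map R LinearMap.id ∘ₗ (TensorProduct.assoc k V V V).symm.toLinearMap

/-- The operator `id ⊗ R` acting on `V ⊗ V ⊗ V`. -/
noncomputable def R₂₃ (R : Module.End k (V ⊗[k] V)) :
    Module.End k (V ⊗[k] (V ⊗[k] V)) :=
  TensorProduct.map LinearMap.id R

theorem stmt_5 (R : Module.End k (V ⊗[k] V)) (q : k)
    (hbraid : R₁₂ R * R₂₃ R * R₁₂ R = R₂₃ R * R₁₂ R * R₂₃ R)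
    (hHecke : (R - q • 1) * (R - 1) = 0)
    (hq : q * (q - 1) * (q ^ 2 - q + 1) ≠ 0)
    (x : V ⊗[k] (V ⊗[k] V))
    (hx : x ∈ LinearMap.range ((R₁₂ R - q • 1) * (R₂₃ R - 1))) :
    R₁₂ R x = x ∧
      R₂₃ R x = q • x + q⁻¹ • (R₁₂ R * R₂₃ R * R₁₂ R) x ∧
      R₁₂ R (q⁻¹ • (R₁₂ R * R₂₃ R * R₁₂ R) x) =
        -(q • x) + q • (q⁻¹ • (R₁₂ R * R₂₃ R * R₁₂ R) x) ∧
      R₂₃ R (q⁻¹ • (R₁₂ R * R₂₃ R * R₁₂ R) x) = q⁻¹ • (R₁₂ R * R₂₃ R * R₁₂ R) x ∧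
      q⁻¹ • (R₁₂ R * R₂₃ R * R₁₂ R) x ∈
        LinearMap.range ((R₂₃ R - q • 1) * (R₁₂ R - 1)) := by
  have hq0 : q ≠ 0 := fun h => hq (by rw [h]; ring)
  have hq2 : q ^ 2 - q + 1 ≠ 0 := fun h => hq (by rw [h]; ring)
  set A := R₁₂ R with hAdef
  set B := R₂₃ R with hBdef
  have honeL : LinearMap.lTensor V (1 : Module.End k (V ⊗[k] V)) = 1 :=
    LinearMap.lTensor_id V (V ⊗[k] V)
  have honeR : LinearMap.rTensor V (1 : Module.End k (V ⊗[k] V)) = 1 :=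
    LinearMap.rTensor_id V (V ⊗[k] V)
  have hHB : (B - q • 1) * (B - 1) = 0 := by
    have h1 : B = LinearMap.lTensor V R := rfl
    have : (B - q • 1) * (B - 1) = LinearMap.lTensor V ((R - q • 1) * (R - 1)) := by
      rw [LinearMap.lTensor_mul, LinearMap.lTensor_sub, LinearMap.lTensor_sub,
        LinearMap.lTensor_smul, honeL, h1]
    rw [this, hHecke, LinearMap.lTensor_zero]
  have hHM : ((LinearMap.rTensor V R) - q • 1) * ((LinearMap.rTensor V R) - 1) = 0 := by
    have : ((LinearMap.rTensor V R) - q • 1) * ((LinearMap.rTensor V R) - 1) =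
        LinearMap.rTensor V ((R - q • 1) * (R - 1)) := by
      rw [LinearMap.rTensor_mul, LinearMap.rTensor_sub, LinearMap.rTensor_sub,
        LinearMap.rTensor_smul, honeR]
    rw [this, hHecke, LinearMap.rTensor_zero]
  have hB : ∀ v, B (B v) = (q + 1) • B v - q • v := by
    intro v
    have := DFunLike.congr_fun hHB v
    simp only [Module.End.mul_apply, LinearMap.sub_apply, LinearMap.smul_apply,
      Module.End.one_apply, LinearMap.zero_apply, map_sub, map_smul] at this
    linear_combination (norm := module) this
  have hA : ∀ v, A (A v) = (q + 1) • A v - q • v := by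
    intro v
    have hM := DFunLike.congr_fun hHM ((TensorProduct.assoc k V V V).symm v)
    simp only [Module.End.mul_apply, LinearMap.sub_apply, LinearMap.smul_apply,
      Module.End.one_apply, LinearMap.zero_apply, map_sub, map_smul] at hM
    have hAv : ∀ w, A w = (TensorProduct.assoc k V V V)
        ((LinearMap.rTensor V R) ((TensorProduct.assoc k V V V).symm w)) := fun w => rfl
    rw [hAv v, hAv]
    rw [LinearEquiv.symm_apply_apply]
    rw [show (LinearMap.rTensor V R) ((LinearMap.rTensor V R)
      ((TensorProduct.assoc k V V V).symm v)) = (q + 1) • (LinearMap.rTensor V R)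
      ((TensorProduct.assoc k V V V).symm v) - q • ((TensorProduct.assoc k V V V).symm v) by
        linear_combination (norm := module) hM]
    simp only [map_sub, map_smul, LinearEquiv.apply_symm_apply]
  have hbr : ∀ v, A (B (A v)) = B (A (B v)) := by
    intro v
    have := DFunLike.congr_fun hbraid v
    simpa only [Module.End.mul_apply] using this
  obtain ⟨z, hz⟩ := hx
  simp only [Module.End.mul_apply, LinearMap.sub_apply, LinearMap.smul_apply,
    Module.End.one_apply, map_sub, map_smul] at hz
  have hxe : x = A (B z) - A z - q • B z + q • z := by
    linear_combination (norm := module) hz.symm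
  have F1 : A x = x := by
    rw [hxe]
    simp only [map_sub, map_add, map_smul]
    linear_combination (norm := module) hA (B z) - hA z
  have habb : A (B (B z)) = (q + 1) • A (B z) - q • A z := by
    rw [hB z]; simp only [map_sub, map_smul]
  have hbabb : B (A (B (B z))) = (q + 1) • B (A (B z)) - q • B (A z) := by
    rw [habb]; simp only [map_sub, map_smul]
  have habab : A (B (A (B z))) = (q + 1) • B (A (B z)) - q • B (A z) := by
    rw [← hbabb]; exact hbr (B z)
  have F2 : q • B x = (q * q) • x + A (B x) := by
    rw [hxe]
    simp only [map_sub, map_add, map_smul]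
    linear_combination (norm := module) (-(q * q)) • hB z - habab + hbr z + q • habb
  have hy : (A * B * A) x = A (B x) := by
    simp only [Module.End.mul_apply, F1]
  rw [hy]
  set y : V ⊗[k] (V ⊗[k] V) := q⁻¹ • A (B x) with hydef
  have hqy : q • y = A (B x) := by
    rw [hydef, smul_smul, mul_inv_cancel₀ hq0, one_smul]
  have G2 : B x = q • x + y := by
    apply smul_right_injective (M := V ⊗[k] (V ⊗[k] V)) hq0
    show q • B x = q • (q • x + y)
    rw [smul_add, smul_smul, hqy]
    exact F2
  have G4 : B y = y := by
    rw [hydef, map_smul]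
    congr 1
    have h1 : B (A (B x)) = A (B (A x)) := (hbr x).symm
    rw [h1, F1]
  have G3 : A y = -(q • x) + q • y := by
    apply smul_right_injective (M := V ⊗[k] (V ⊗[k] V)) hq0
    show q • A y = q • (-(q • x) + q • y)
    have h2 : q • A y = A (A (B x)) := by rw [← map_smul, hqy]
    rw [h2, hA (B x), ← hqy, G2]
    module
  refine ⟨F1, G2, G3, G4, ?_⟩
  have key : ((B - q • 1) * (A - 1)) y = (q - 1 - q * q) • y := by
    have e1 : ((B - q • 1) * (A - 1)) y = B (A y) - B y - q • A y + q • y := by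
      simp only [Module.End.mul_apply, LinearMap.sub_apply, LinearMap.smul_apply,
        Module.End.one_apply, map_sub]
      module
    have e2 : B (A y) = -(q • (q • x + y)) + q • y := by
      rw [G3, map_add, map_neg, map_smul, map_smul, G2, G4]
    rw [e1, e2, G4, G3]
    module
  refine ⟨(-(q ^ 2 - q + 1)⁻¹) • y, ?_⟩
  rw [map_smul, key, smul_smul]
  have hc : -(q ^ 2 - q + 1)⁻¹ * (q - 1 - q * q) = 1 := by
    rw [show q - 1 - q * q = -(q ^ 2 - q + 1) by ring, neg_mul_neg, inv_mul_cancel₀ hq2]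
  rw [hc, one_smul]
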